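/- (Lemma 2.5(ii)) Under the setup of Lemma 2.5 (z₁ a type-2 approximation with precision ε of the minimizer of z ↦ g(z) + (1/(2τ))‖z − (z₀ − D⁻¹u)‖²_D, and z₂ a type-1 approximation with precision ε of the minimizer of z ↦ g(z) + (1/(2τ))‖z − (z₀ − D⁻¹v)‖²_D), for every z ∈ ℝ^d one has g(z₁) − g(z) + ⟨z₁ − z, (1/τ)v⟩ ≤ (1/(2τ))(‖z − z₀‖²_D − ‖z − z₂‖²_D) + (1/(2τ))(‖D⁻¹(u − v)‖²_D − ‖z₀ − z₁‖²_D) + 2ε + √(2ε/τ)·‖z − z₂‖_D. -/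

import Mathlib

open Matrix

/-- squared M-norm: ⟨x, M x⟩ -/
noncomputable def sqnorm {d : ℕ} (M : Matrix (Fin d) (Fin d) ℝ) (x : Fin d → ℝ) : ℝ :=
  x ⬝ᵥ M.mulVec x

/-- M-norm: √⟨x, M x⟩ -/
noncomputable def mnorm {d : ℕ} (M : Matrix (Fin d) (Fin d) ℝ) (x : Fin d → ℝ) : ℝ :=
  Real.sqrt (x ⬝ᵥ M.mulVec x)

/-- Lemma 2.5(ii). -/
theorem key_descent_ineq {d : ℕ}
    (D : Matrix (Fin d) (Fin d) ℝ) (hD : D.PosDef)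
    (τ : ℝ) (hτ : 0 < τ) (ε : ℝ) (hε : 0 < ε)
    (g : (Fin d → ℝ) → ℝ) (hconv : ConvexOn ℝ Set.univ g)
    (z₀ u v z₁ z₂ : Fin d → ℝ)
    (h1 : ∀ x, g x ≥ g z₁ +
        ((1 / τ) • D.mulVec (z₀ - D⁻¹.mulVec u - z₁)) ⬝ᵥ (x - z₁) - ε)
    (h2 : ∀ x, g x + (1 / (2 * τ)) * sqnorm D (x - (z₀ - D⁻¹.mulVec v))
        ≥ g z₂ + (1 / (2 * τ)) * sqnorm D (z₂ - (z₀ - D⁻¹.mulVec v)) - ε) :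
    ∀ z : Fin d → ℝ,
      g z₁ - g z + (z₁ - z) ⬝ᵥ ((1 / τ) • v)
        ≤ (1 / (2 * τ)) * (sqnorm D (z - z₀) - sqnorm D (z - z₂))
          + (1 / (2 * τ)) * (sqnorm D (D⁻¹.mulVec (u - v)) - sqnorm D (z₀ - z₁))
          + 2 * ε + Real.sqrt (2 * ε / τ) * mnorm D (z - z₂) := by
  -- basic facts about D
  have hDinv : ∀ w : Fin d → ℝ, D.mulVec (D⁻¹.mulVec w) = w := by
    intro w
    rw [Matrix.mulVec_mulVec, Matrix.mul_nonsing_inv _ hD.det_pos.ne'.isUnit,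
      Matrix.one_mulVec]
  have hsymm : ∀ a b : Fin d → ℝ, a ⬝ᵥ D.mulVec b = b ⬝ᵥ D.mulVec a := by
    intro a b
    have hsym : Dᵀ = D := by
      have := hD.1
      rwa [Matrix.IsHermitian, Matrix.conjTranspose_eq_transpose_of_trivial] at this
    rw [Matrix.dotProduct_mulVec, ← hsym, Matrix.vecMul_transpose, dotProduct_comm, hsym]
  have hpos : ∀ a : Fin d → ℝ, (0:ℝ) ≤ a ⬝ᵥ D.mulVec a := by
    intro a
    simpa using hD.posSemidef.dotProduct_mulVec_nonneg a
  set p := D⁻¹.mulVec u with hp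
  set q := D⁻¹.mulVec v with hq
  have hr : D⁻¹.mulVec (u - v) = p - q := by rw [hp, hq, Matrix.mulVec_sub]
  have hDq : D.mulVec q = v := hDinv v
  -- Cauchy-Schwarz / AM-GM
  have cauchy : ∀ a b : Fin d → ℝ,
      2 * (a ⬝ᵥ D.mulVec b) ≤ a ⬝ᵥ D.mulVec a + b ⬝ᵥ D.mulVec b := by
    intro a b
    have h0 := hpos (a - b)
    simp only [Matrix.mulVec_sub, dotProduct_sub, sub_dotProduct] at h0
    linarith [hsymm a b]
  -- exact quadratic identity along segments
  have quadid : ∀ (a b w : Fin d → ℝ) (t : ℝ),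
      sqnorm D ((a + t • (b - a)) - w)
        = (1 - t) * sqnorm D (a - w) + t * sqnorm D (b - w)
          - t * (1 - t) * sqnorm D (b - a) := by
    intro a b w t
    simp only [sqnorm, Matrix.mulVec_sub, Matrix.mulVec_add, Matrix.mulVec_smul,
      dotProduct_sub, dotProduct_add, dotProduct_smul, sub_dotProduct, add_dotProduct,
      smul_dotProduct, smul_eq_mul]
    simp only [hsymm b a, hsymm w a, hsymm w b]
    ring
  intro z
  -- the big bilinear identity
  have bigid :
      (-2) * ((z₂ - z₁) ⬝ᵥ D.mulVec (z₀ - p - z₁)) + 2 * ((z₁ - z) ⬝ᵥ D.mulVec q)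
        + sqnorm D (z - (z₀ - q)) - sqnorm D (z₂ - (z₀ - q))
      = sqnorm D (z - z₀) - sqnorm D (z₀ - z₁)
        + (2 * ((z₂ - z₁) ⬝ᵥ D.mulVec (p - q)) - sqnorm D (z₂ - z₁)) := by
    simp only [sqnorm, Matrix.mulVec_sub, Matrix.mulVec_add, dotProduct_sub,
      dotProduct_add, sub_dotProduct, add_dotProduct]
    simp only [hsymm z₀ z, hsymm z₁ z, hsymm z₂ z, hsymm p z, hsymm q z,
      hsymm z₁ z₀, hsymm z₂ z₀, hsymm p z₀, hsymm q z₀,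
      hsymm z₂ z₁, hsymm p z₁, hsymm q z₁, hsymm p z₂, hsymm q z₂, hsymm q p]
    ring
  -- h1 applied at z₂
  have H1 : g z₂ ≥ g z₁ + (1 / τ) * ((z₂ - z₁) ⬝ᵥ D.mulVec (z₀ - p - z₁)) - ε := by
    have h := h1 z₂
    rwa [smul_dotProduct, smul_eq_mul, dotProduct_comm] at h
  -- family of strong-convexity bounds from h2
  have G : ∀ t : ℝ, 0 < t → t ≤ 1 →
      g z ≥ g z₂
        + (1 / (2 * τ)) * (sqnorm D (z₂ - (z₀ - q)) - sqnorm D (z - (z₀ - q)))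
        + ((1 - t) / (2 * τ)) * sqnorm D (z - z₂) - ε / t := by
    intro t ht ht1
    have hx := h2 (z₂ + t • (z - z₂))
    have hq' := quadid z₂ z (z₀ - q) t
    have hcv := hconv.2 (Set.mem_univ z₂) (Set.mem_univ z)
      (by linarith : (0:ℝ) ≤ 1 - t) ht.le (by ring)
    have hpt : (1 - t) • z₂ + t • z = z₂ + t • (z - z₂) := by module
    rw [hpt, smul_eq_mul, smul_eq_mul] at hcv
    rw [hq'] at hx
    have hmain : -ε ≤ (g z - g z₂
        - (1 / (2 * τ)) * (sqnorm D (z₂ - (z₀ - q)) - sqnorm D (z - (z₀ - q)))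
        - ((1 - t) / (2 * τ)) * sqnorm D (z - z₂)) * t := by
      have hiden : (g z - g z₂
          - (1 / (2 * τ)) * (sqnorm D (z₂ - (z₀ - q)) - sqnorm D (z - (z₀ - q)))
          - ((1 - t) / (2 * τ)) * sqnorm D (z - z₂)) * t - (-ε)
        = (((1 - t) * g z₂ + t * g z) - g (z₂ + t • (z - z₂)))
          + ((g (z₂ + t • (z - z₂)) + 1 / (2 * τ) * ((1 - t) * sqnorm D (z₂ - (z₀ - q))
              + t * sqnorm D (z - (z₀ - q)) - t * (1 - t) * sqnorm D (z - z₂)))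
            - (g z₂ + 1 / (2 * τ) * sqnorm D (z₂ - (z₀ - q)) - ε)) := by
        field_simp
        ring
      linarith [sub_nonneg.mpr hcv, sub_nonneg.mpr hx, hiden.le, hiden.ge]
    have h5 : (-ε) / t ≤ g z - g z₂
        - (1 / (2 * τ)) * (sqnorm D (z₂ - (z₀ - q)) - sqnorm D (z - (z₀ - q)))
        - ((1 - t) / (2 * τ)) * sqnorm D (z - z₂) := (div_le_iff₀ ht).mpr hmain
    rw [neg_div] at h5
    linarith
  -- the key consequence with optimized t
  have key2 : g z ≥ g z₂
      + (1 / (2 * τ)) * (sqnorm D (z₂ - (z₀ - q)) - sqnorm D (z - (z₀ - q)))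
      + (1 / (2 * τ)) * sqnorm D (z - z₂)
      - Real.sqrt (2 * ε / τ) * mnorm D (z - z₂) - ε := by
    have hs0 : 0 ≤ mnorm D (z - z₂) := Real.sqrt_nonneg _
    have hs2 : mnorm D (z - z₂) ^ 2 = sqnorm D (z - z₂) := Real.sq_sqrt (hpos _)
    set s := mnorm D (z - z₂) with hsdef
    set c := Real.sqrt (2 * τ * ε) with hcdef
    have hc0 : 0 < c := Real.sqrt_pos.mpr (by positivity)
    have hc2 : c ^ 2 = 2 * τ * ε := Real.sq_sqrt (by positivity)
    have hsq : Real.sqrt (2 * ε / τ) = c / τ := by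
      have hmul : c * Real.sqrt (2 * ε / τ) = c * (c / τ) := by
        rw [hcdef, ← Real.sqrt_mul (by positivity),
          show (2 * τ * ε) * (2 * ε / τ) = (2 * ε) ^ 2 by field_simp,
          Real.sqrt_sq (by positivity)]
        rw [← hcdef]
        field_simp
        linear_combination -hc2
      exact mul_left_cancel₀ hc0.ne' hmul
    rcases le_or_gt s c with hsc | hsc
    · have hG := G 1 one_pos le_rfl
      have h6 : (1 / (2 * τ)) * sqnorm D (z - z₂) ≤ Real.sqrt (2 * ε / τ) * s := by
        rw [← hs2, hsq]
        rw [div_mul_eq_mul_div, div_mul_eq_mul_div, div_le_div_iff₀ (by positivity) hτ]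
        nlinarith [mul_le_mul_of_nonneg_left hsc hs0]
      have e : (1 - 1) / (2 * τ) * sqnorm D (z - z₂) = 0 := by ring
      have e2 : ε / 1 = ε := div_one ε
      linarith [hG, h6, e, e2]
    · have hs0' : 0 < s := lt_trans hc0 hsc
      have ht : 0 < c / s := div_pos hc0 hs0'
      have ht1 : c / s ≤ 1 := (div_le_one hs0').mpr hsc.le
      have hG := G (c / s) ht ht1
      have hε' : ε = c ^ 2 / (2 * τ) := by
        field_simp
        linear_combination -hc2
      have h6 : (1 - c / s) / (2 * τ) * sqnorm D (z - z₂) - ε / (c / s)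
          = 1 / (2 * τ) * sqnorm D (z - z₂) - c / τ * s := by
        rw [← hs2, hε']
        have hsne : s ≠ 0 := hs0'.ne'
        have hcne : c ≠ 0 := hc0.ne'
        have hτne : τ ≠ 0 := hτ.ne'
        field_simp
        ring
      rw [hsq]
      linarith [hG, h6.ge, h6.le, hε]
  -- scale the identities/inequalities
  have bigid' := congrArg (fun x => (1 / (2 * τ)) * x) bigid
  have cauchy' : (1 / (2 * τ)) * (2 * ((z₂ - z₁) ⬝ᵥ D.mulVec (p - q)) - sqnorm D (z₂ - z₁))
      ≤ (1 / (2 * τ)) * sqnorm D (p - q) := by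
    apply mul_le_mul_of_nonneg_left _ (by positivity)
    have := cauchy (z₂ - z₁) (p - q)
    simp only [sqnorm]
    linarith
  have hv : (z₁ - z) ⬝ᵥ ((1 / τ) • v) = (1 / τ) * ((z₁ - z) ⬝ᵥ D.mulVec q) := by
    rw [dotProduct_smul, smul_eq_mul, hDq]
  rw [hv, hr]
  have hfin : (1 / (2 * τ) * (sqnorm D (z - z₀) - sqnorm D (z - z₂))
        + 1 / (2 * τ) * (sqnorm D (p - q) - sqnorm D (z₀ - z₁))
        + 2 * ε + Real.sqrt (2 * ε / τ) * mnorm D (z - z₂))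
      - (g z₁ - g z + 1 / τ * ((z₁ - z) ⬝ᵥ D.mulVec q))
    = (g z₂ - (g z₁ + 1 / τ * ((z₂ - z₁) ⬝ᵥ D.mulVec (z₀ - p - z₁)) - ε))
      + (g z - (g z₂
          + (1 / (2 * τ)) * (sqnorm D (z₂ - (z₀ - q)) - sqnorm D (z - (z₀ - q)))
          + (1 / (2 * τ)) * sqnorm D (z - z₂)
          - Real.sqrt (2 * ε / τ) * mnorm D (z - z₂) - ε))
      + ((1 / (2 * τ)) * sqnorm D (p - q)
          - (1 / (2 * τ)) * (2 * ((z₂ - z₁) ⬝ᵥ D.mulVec (p - q)) - sqnorm D (z₂ - z₁)))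
      + ((1 / (2 * τ)) * (sqnorm D (z - z₀) - sqnorm D (z₀ - z₁)
            + (2 * ((z₂ - z₁) ⬝ᵥ D.mulVec (p - q)) - sqnorm D (z₂ - z₁)))
          - (1 / (2 * τ)) * ((-2) * ((z₂ - z₁) ⬝ᵥ D.mulVec (z₀ - p - z₁))
            + 2 * ((z₁ - z) ⬝ᵥ D.mulVec q)
            + sqnorm D (z - (z₀ - q)) - sqnorm D (z₂ - (z₀ - q)))) := by
    ring
  linarith [H1, key2, cauchy', bigid', hfin.le, hfin.ge]
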